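/- Let ρ : E → L̄⁰(G) be regular, μ : E → L⁰(G) L⁰(G)-linear, and R(Y,μ) := ess inf { ρ(ξ) : μ(ξ) ≥ Y }. If R(Y,μ) < α on some set of positive probability for α ∈ L⁰(G), then there exists a single ξ ∈ E with μ(ξ) ≥ Y and ρ(ξ) < α a.s. on that set. (Attainability of strict bounds from downward directedness and countable concatenation.) -/

import Mathlib

open MeasureTheory Filter Topology
open scoped Classical

/-- Essential infimum of a family of extended-real random variables. -/
def IsEssInf {Ω : Type*} [MeasurableSpace Ω] (μ : MeasureTheory.Measure Ω)
    (S : Set (Ω → EReal)) (g : Ω → EReal) : Prop :=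
  (∀ f ∈ S, ∀ᵐ ω ∂μ, g ω ≤ f ω) ∧
  ∀ h : Ω → EReal, (∀ f ∈ S, ∀ᵐ ω ∂μ, h ω ≤ f ω) → ∀ᵐ ω ∂μ, h ω ≤ g ω

/-- For regular `ρ : E → L̄⁰(G)` and `L⁰(G)`-linear `ν`, with
`R(Y,ν) = ess inf {ρ(ξ) : ν(ξ) ≥ Y}`: if `R(Y,ν) < α` on a set `A` of positive
probability (`α ∈ L⁰(G)`), then there exists a single `ξ ∈ E` with `ν(ξ) ≥ Y`
and `ρ(ξ) < α` a.s. on `A`. -/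
theorem dual_R_attainability
    {Ω : Type*} {mF : MeasurableSpace Ω} (m : MeasurableSpace Ω) (hm : m ≤ mF)
    (μ : Measure Ω) [IsProbabilityMeasure μ]
    (E : Set (Ω → ℝ)) (ρ : (Ω → ℝ) → Ω → EReal) (ν : (Ω → ℝ) → Ω → ℝ)
    (hρmeas : ∀ ξ ∈ E, Measurable[m] (ρ ξ)) (hνmeas : ∀ ξ ∈ E, Measurable[m] (ν ξ))
    -- `E` is closed under countable concatenations along `G`-measurable partitions
    (hEcc : ∀ (A : ℕ → Set Ω), (∀ n, MeasurableSet[m] (A n)) →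
      Pairwise (Function.onFun Disjoint A) → (⋃ n, A n) = Set.univ →
      ∀ X : ℕ → Ω → ℝ, (∀ n, X n ∈ E) →
      (fun ω => ∑' n, (A n).indicator (X n) ω) ∈ E)
    -- `E` is closed under pasting and `ρ` is regular
    (hreg : ∀ X₁ ∈ E, ∀ X₂ ∈ E, ∀ A : Set Ω, MeasurableSet[m] A →
      (fun ω => if ω ∈ A then X₁ ω else X₂ ω) ∈ E ∧
      ρ (fun ω => if ω ∈ A then X₁ ω else X₂ ω)
        =ᵐ[μ] fun ω => if ω ∈ A then ρ X₁ ω else ρ X₂ ω)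
    -- `L⁰(G)`-linearity of `ν`
    (hlin : ∀ α β : Ω → ℝ, Measurable[m] α → Measurable[m] β →
      ∀ X ∈ E, ∀ Y ∈ E,
      (fun ω => α ω * X ω + β ω * Y ω) ∈ E ∧
      ν (fun ω => α ω * X ω + β ω * Y ω)
        =ᵐ[μ] fun ω => α ω * ν X ω + β ω * ν Y ω)
    (Y : Ω → ℝ) (hY : Measurable[m] Y)
    (g : Ω → EReal)
    (hg : IsEssInf μ {f | ∃ ξ ∈ E, (∀ᵐ ω ∂μ, Y ω ≤ ν ξ ω) ∧ f = ρ ξ} g)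
    (α : Ω → ℝ) (hα : Measurable[m] α)
    (A : Set Ω) (hA : MeasurableSet[m] A) (hApos : 0 < μ A)
    (hlt : ∀ᵐ ω ∂μ, ω ∈ A → g ω < (α ω : EReal)) :
    ∃ ξ ∈ E, (∀ᵐ ω ∂μ, Y ω ≤ ν ξ ω) ∧
      ∀ᵐ ω ∂μ, ω ∈ A → ρ ξ ω < (α ω : EReal) := by
  classical
  -- coercion of α to EReal is m-measurable
  have hαE : Measurable[m] (fun ω => (α ω : EReal)) :=
    measurable_coe_real_ereal.comp hα
  -- positive-measure sets meet a.e. sets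
  have hex_pos : ∀ {S : Set Ω} {P : Ω → Prop}, 0 < μ S → (∀ᵐ ω ∂μ, P ω) →
      ∃ ω ∈ S, P ω := by
    intro S P hS hP
    by_contra hcon
    push_neg at hcon
    have hsub : S ⊆ {ω | ¬ P ω} := fun ω hω => hcon ω hω
    exact hS.ne' (measure_mono_null hsub (ae_iff.mp hP))
  -- measurability of the "good" sets
  have hDmeas : ∀ ξ ∈ E, MeasurableSet[m] (A ∩ {ω | ρ ξ ω < (α ω : EReal)}) :=
    fun ξ hξ => hA.inter (measurableSet_lt (hρmeas ξ hξ) hαE)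
  -- locality of ρ
  have ρ_loc : ∀ X ∈ E, ∀ X' ∈ E, ∀ C : Set Ω, MeasurableSet[m] C →
      (∀ ω ∈ C, X ω = X' ω) → ∀ᵐ ω ∂μ, ω ∈ C → ρ X' ω = ρ X ω := by
    intro X hX X' hX' C hC hagree
    obtain ⟨-, hρeq⟩ := hreg X hX X' hX' C hC
    have hfe : (fun ω => if ω ∈ C then X ω else X' ω) = X' := by
      funext ω
      by_cases h : ω ∈ C
      · simp [h, hagree ω h]
      · simp [h]
    rw [hfe] at hρeq
    filter_upwards [hρeq] with ω h hω
    rw [h]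
    simp [hω]
  -- locality of ν
  have ν_loc : ∀ X ∈ E, ∀ X' ∈ E, ∀ C : Set Ω, MeasurableSet[m] C →
      (∀ ω ∈ C, X ω = X' ω) → ∀ᵐ ω ∂μ, ω ∈ C → ν X' ω = ν X ω := by
    intro X hX X' hX' C hC hagree
    have hiC : Measurable[m] (C.indicator (fun _ => (1 : ℝ))) :=
      measurable_const.indicator hC
    have hiCc : Measurable[m] (Cᶜ.indicator (fun _ => (1 : ℝ))) :=
      measurable_const.indicator hC.compl
    obtain ⟨-, hνeq⟩ := hlin _ _ hiC hiCc X hX X' hX'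
    have hfe : (fun ω => C.indicator (fun _ => (1 : ℝ)) ω * X ω +
        Cᶜ.indicator (fun _ => (1 : ℝ)) ω * X' ω) = X' := by
      funext ω
      by_cases h : ω ∈ C
      · simp [Set.indicator_apply, h, hagree ω h]
      · simp [Set.indicator_apply, h]
    rw [hfe] at hνeq
    filter_upwards [hνeq] with ω h hω
    rw [h]
    simp [Set.indicator_apply, hω]
  -- feasibility predicate
  set Feas : (Ω → ℝ) → Prop :=
      fun ξ => ξ ∈ E ∧ ∀ᵐ ω ∂μ, Y ω ≤ ν ξ ω with hFeasdef
  -- the feasible set is nonempty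
  have hFne : ∃ ξ, Feas ξ := by
    by_contra hns
    push_neg at hns
    have htop : ∀ᵐ ω ∂μ, (⊤ : EReal) ≤ g ω := by
      refine hg.2 (fun _ => (⊤ : EReal)) ?_
      rintro f ⟨ξ, hξ, hfeas, rfl⟩
      exact absurd ⟨hξ, hfeas⟩ (hns ξ)
    obtain ⟨ω, hωA, h1, h2⟩ :=
      hex_pos hApos (hlt.and htop : ∀ᵐ ω ∂μ, (ω ∈ A → g ω < (α ω : EReal)) ∧ (⊤ : EReal) ≤ g ω)
    exact absurd ((h1 hωA).trans_le (le_top)) (not_lt.mpr h2)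
  -- supremum of the measures of good sets
  set s : ENNReal := ⨆ ξ, ⨆ _ : Feas ξ, μ (A ∩ {ω | ρ ξ ω < (α ω : EReal)}) with hsdef
  have hs_ne_top : s ≠ ⊤ := by
    refine ne_top_of_le_ne_top (by simp : (1 : ENNReal) ≠ ⊤) ?_
    exact iSup_le fun ξ => iSup_le fun _ => prob_le_one
  have hle_s : ∀ ξ, Feas ξ → μ (A ∩ {ω | ρ ξ ω < (α ω : EReal)}) ≤ s := by
    intro ξ hξ
    exact le_iSup₂ (f := fun ξ (_ : Feas ξ) => μ (A ∩ {ω | ρ ξ ω < (α ω : EReal)})) ξ hξ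
  -- approximating sequence
  have happrox : ∀ n : ℕ, ∃ ξ, Feas ξ ∧
      s ≤ μ (A ∩ {ω | ρ ξ ω < (α ω : EReal)}) + ((n : ENNReal))⁻¹ := by
    intro n
    by_contra hcon
    push_neg at hcon
    obtain ⟨ξ₀, hξ₀⟩ := hFne
    have hpos : (0 : ENNReal) < s := lt_of_le_of_lt zero_le (hcon ξ₀ hξ₀)
    have hinv_pos : ((n : ENNReal))⁻¹ ≠ 0 :=
      ENNReal.inv_ne_zero.mpr (ENNReal.natCast_ne_top n)
    have hn0 : n ≠ 0 := by
      rintro rfl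
      have h0 := hcon ξ₀ hξ₀
      rw [Nat.cast_zero, ENNReal.inv_zero, add_top] at h0
      exact not_top_lt h0
    have hub : s ≤ s - ((n : ENNReal))⁻¹ := by
      rw [hsdef]
      refine iSup_le fun ξ => iSup_le fun hξ => ?_
      have := (hcon ξ hξ).le
      exact ENNReal.le_sub_of_add_le_right
        (ENNReal.inv_ne_top.mpr (Nat.cast_ne_zero.mpr hn0)) this
    exact absurd (hub.trans_lt (ENNReal.sub_lt_self hs_ne_top hpos.ne' hinv_pos))
      (lt_irrefl s)
  choose ξs hξsF hξsApprox using happrox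
  -- the good sets of the approximating sequence
  set D : ℕ → Set Ω := fun n => A ∩ {ω | ρ (ξs n) ω < (α ω : EReal)} with hDdef
  have hDmeas' : ∀ n, MeasurableSet[m] (D n) := fun n => hDmeas (ξs n) (hξsF n).1
  set U : Set Ω := ⋃ n, D n with hUdef
  have hsU : s ≤ μ U := by
    refine ENNReal.le_of_forall_pos_le_add fun ε hε _ => ?_
    obtain ⟨n, hn⟩ := ENNReal.exists_inv_nat_lt (a := (ε : ENNReal)) (by simpa using hε.ne')
    calc s ≤ μ (D n) + ((n : ENNReal))⁻¹ := hξsApprox n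
    _ ≤ μ U + (ε : ENNReal) := add_le_add (measure_mono (Set.subset_iUnion D n)) hn.le
  -- disjointify, putting the leftover into piece 0
  set Bp : ℕ → Set Ω := disjointed D with hBpdef
  set B : ℕ → Set Ω := fun n => if n = 0 then Bp 0 ∪ Uᶜ else Bp n with hBdef
  have hBpsubB : ∀ n, Bp n ⊆ B n := by
    intro n
    rcases Nat.eq_zero_or_pos n with h | h
    · subst h; rw [hBdef]; simp
    · rw [hBdef]; simp [Nat.pos_iff_ne_zero.mp h]
  have hBpsubU : ∀ n, Bp n ⊆ U := fun n =>
    (disjointed_subset D n).trans (Set.subset_iUnion D n)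
  have hBmeas : ∀ n, MeasurableSet[m] (B n) := by
    intro n
    have hBp : ∀ k, MeasurableSet[m] (Bp k) := MeasurableSet.disjointed hDmeas'
    rcases Nat.eq_zero_or_pos n with h | h
    · subst h
      rw [hBdef]
      simp only [if_pos rfl]
      exact (hBp 0).union (MeasurableSet.iUnion hDmeas').compl
    · rw [hBdef]
      simp only [if_neg (Nat.pos_iff_ne_zero.mp h)]
      exact hBp n
  have hBpdisj : Pairwise (Function.onFun Disjoint Bp) := disjoint_disjointed D
  have hBdisj : Pairwise (Function.onFun Disjoint B) := by
    intro i j hij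
    have hUc : ∀ k, Disjoint Uᶜ (Bp k) := fun k =>
      Set.disjoint_left.mpr fun ω hω hω' => hω (hBpsubU k hω')
    rw [Function.onFun, hBdef]
    rcases Nat.eq_zero_or_pos i with hi | hi <;> rcases Nat.eq_zero_or_pos j with hj | hj
    · exact absurd (hi.trans hj.symm) hij
    · subst hi
      simp only [if_pos rfl, if_neg (Nat.pos_iff_ne_zero.mp hj)]
      exact Set.disjoint_union_left.mpr ⟨hBpdisj hij, hUc j⟩
    · subst hj
      simp only [if_pos rfl, if_neg (Nat.pos_iff_ne_zero.mp hi)]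
      exact (Set.disjoint_union_left.mpr ⟨hBpdisj hij.symm, hUc i⟩).symm
    · simp only [if_neg (Nat.pos_iff_ne_zero.mp hi), if_neg (Nat.pos_iff_ne_zero.mp hj)]
      exact hBpdisj hij
  have hBunion : (⋃ n, B n) = Set.univ := by
    rw [Set.eq_univ_iff_forall]
    intro ω
    by_cases hω : ω ∈ U
    · have : ω ∈ ⋃ n, Bp n := by
        rw [hBpdef, iUnion_disjointed]
        exact hω
      obtain ⟨n, hn⟩ := Set.mem_iUnion.mp this
      exact Set.mem_iUnion.mpr ⟨n, hBpsubB n hn⟩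
    · refine Set.mem_iUnion.mpr ⟨0, ?_⟩
      rw [hBdef]
      simp only [if_pos rfl]
      exact Or.inr hω
  -- the concatenated candidate
  set ξstar : Ω → ℝ := fun ω => ∑' n, (B n).indicator (ξs n) ω with hξstardef
  have hξstarE : ξstar ∈ E :=
    hEcc B hBmeas hBdisj hBunion ξs (fun n => (hξsF n).1)
  have hξstar_on : ∀ n, ∀ ω ∈ B n, ξstar ω = ξs n ω := by
    intro n ω hω
    have hz : ∀ k, k ≠ n → (B k).indicator (ξs k) ω = 0 := by
      intro k hk
      exact Set.indicator_of_notMem (Set.disjoint_left.mp (hBdisj hk) · hω) _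
    show (∑' k, (B k).indicator (ξs k) ω) = ξs n ω
    rw [tsum_eq_single n hz, Set.indicator_of_mem hω]
  -- ρ and ν of the candidate on each piece
  have hρstar : ∀ n, ∀ᵐ ω ∂μ, ω ∈ B n → ρ ξstar ω = ρ (ξs n) ω :=
    fun n => ρ_loc (ξs n) (hξsF n).1 ξstar hξstarE (B n) (hBmeas n)
      (fun ω hω => (hξstar_on n ω hω).symm)
  have hνstar : ∀ n, ∀ᵐ ω ∂μ, ω ∈ B n → ν ξstar ω = ν (ξs n) ω :=
    fun n => ν_loc (ξs n) (hξsF n).1 ξstar hξstarE (B n) (hBmeas n)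
      (fun ω hω => (hξstar_on n ω hω).symm)
  -- feasibility of the candidate
  have hξstarFeasν : ∀ᵐ ω ∂μ, Y ω ≤ ν ξstar ω := by
    have hall : ∀ᵐ ω ∂μ, ∀ n, (ω ∈ B n → ν ξstar ω = ν (ξs n) ω) ∧ Y ω ≤ ν (ξs n) ω :=
      ae_all_iff.mpr fun n => (hνstar n).and (hξsF n).2
    filter_upwards [hall] with ω hω
    have : ω ∈ ⋃ n, B n := hBunion ▸ Set.mem_univ ω
    obtain ⟨n, hn⟩ := Set.mem_iUnion.mp this
    rw [(hω n).1 hn]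
    exact (hω n).2
  have hξstarFeas : Feas ξstar := ⟨hξstarE, hξstarFeasν⟩
  -- the candidate attains the supremum
  have hstar_ge : s ≤ μ (A ∩ {ω | ρ ξstar ω < (α ω : EReal)}) := by
    refine hsU.trans (measure_mono_ae ?_)
    have hall : ∀ᵐ ω ∂μ, ∀ n, ω ∈ B n → ρ ξstar ω = ρ (ξs n) ω := ae_all_iff.mpr hρstar
    filter_upwards [hall] with ω hω hωU
    have : ω ∈ ⋃ n, Bp n := by
      rw [hBpdef, iUnion_disjointed]
      exact hωU
    obtain ⟨n, hn⟩ := Set.mem_iUnion.mp this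
    have hωD : ω ∈ D n := disjointed_subset D n hn
    refine ⟨hωD.1, ?_⟩
    have := hω n (hBpsubB n hn)
    rw [Set.mem_setOf_eq, this]
    exact hωD.2
  -- the remainder set
  set Dr : Set Ω := A \ (A ∩ {ω | ρ ξstar ω < (α ω : EReal)}) with hDrdef
  have hDrmeas : MeasurableSet[m] Dr := hA.diff (hDmeas ξstar hξstarE)
  -- conclude, by showing the remainder is null
  refine ⟨ξstar, hξstarE, hξstarFeasν, ?_⟩
  have hDrnull : μ Dr = 0 := by
    by_contra hz
    have hDrpos : 0 < μ Dr := pos_iff_ne_zero.mpr hz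
    by_cases hexi : ∃ ξ, Feas ξ ∧ 0 < μ (Dr ∩ {ω | ρ ξ ω < (α ω : EReal)})
    · -- improvement step: contradiction with maximality of s
      obtain ⟨ξ, hξF, hVpos⟩ := hexi
      obtain ⟨V, hVdef⟩ : ∃ V' : Set Ω, V' = Dr ∩ {ω | ρ ξ ω < (α ω : EReal)} :=
        ⟨_, rfl⟩
      rw [← hVdef] at hVpos
      have hVmeas : MeasurableSet[m] V := by
        rw [hVdef]
        exact hDrmeas.inter (measurableSet_lt (hρmeas ξ hξF.1) hαE)
      obtain ⟨hξ'E, hρ'⟩ := hreg ξ hξF.1 ξstar hξstarE V hVmeas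
      -- feasibility of ξ'
      have hiV : Measurable[m] (V.indicator (fun _ => (1 : ℝ))) :=
        measurable_const.indicator hVmeas
      have hiVc : Measurable[m] (Vᶜ.indicator (fun _ => (1 : ℝ))) :=
        measurable_const.indicator hVmeas.compl
      obtain ⟨-, hν'⟩ := hlin _ _ hiV hiVc ξ hξF.1 ξstar hξstarE
      have hfe : (fun ω => V.indicator (fun _ => (1 : ℝ)) ω * ξ ω +
          Vᶜ.indicator (fun _ => (1 : ℝ)) ω * ξstar ω)
          = fun ω => if ω ∈ V then ξ ω else ξstar ω := by
        funext ω
        by_cases h : ω ∈ V <;> simp [Set.indicator_apply, h]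
      rw [hfe] at hν'
      have hξ'ν : ∀ᵐ ω ∂μ, Y ω ≤ ν (fun ω => if ω ∈ V then ξ ω else ξstar ω) ω := by
        filter_upwards [hν', hξF.2, hξstarFeasν] with ω h h1 h2
        rw [h]
        by_cases hω : ω ∈ V <;> simp [Set.indicator_apply, hω, h1, h2]
      -- the good set of ξ' contains that of ξstar and V
      have hgood : ∀ᵐ ω ∂μ, ω ∈ (A ∩ {ω | ρ ξstar ω < (α ω : EReal)}) ∪ V →
          ω ∈ A ∩ {ω | ρ (fun ω => if ω ∈ V then ξ ω else ξstar ω) ω < (α ω : EReal)} := by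
        filter_upwards [hρ'] with ω h hω
        rcases hω with hω | hω
        · have hnV : ω ∉ V := fun hV => (hVdef ▸ hV).1.2 hω
          refine ⟨hω.1, ?_⟩
          rw [Set.mem_setOf_eq, h]
          simp only [if_neg hnV]
          exact hω.2
        · refine ⟨(hVdef ▸ hω).1.1, ?_⟩
          rw [Set.mem_setOf_eq, h]
          simp only [if_pos hω]
          exact (hVdef ▸ hω).2
      have hdisjV : Disjoint (A ∩ {ω | ρ ξstar ω < (α ω : EReal)}) V :=
        Set.disjoint_left.mpr fun ω hω hV => (hVdef ▸ hV).1.2 hω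
      have hμunion : μ ((A ∩ {ω | ρ ξstar ω < (α ω : EReal)}) ∪ V)
          = μ (A ∩ {ω | ρ ξstar ω < (α ω : EReal)}) + μ V :=
        measure_union hdisjV hVmeas
      have hgt : s < μ (A ∩ {ω | ρ (fun ω => if ω ∈ V then ξ ω else ξstar ω) ω < (α ω : EReal)}) := by
        calc s < s + μ V := ENNReal.lt_add_right hs_ne_top hVpos.ne'
        _ ≤ μ (A ∩ {ω | ρ ξstar ω < (α ω : EReal)}) + μ V := add_le_add_left hstar_ge _
        _ = μ ((A ∩ {ω | ρ ξstar ω < (α ω : EReal)}) ∪ V) := hμunion.symm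
        _ ≤ μ (A ∩ {ω | ρ (fun ω => if ω ∈ V then ξ ω else ξstar ω) ω < (α ω : EReal)}) := measure_mono_ae hgood
      exact absurd (hle_s _ ⟨hξ'E, hξ'ν⟩) (not_le.mpr hgt)
    · -- otherwise α is a lower bound on Dr, contradicting g < α on A
      push_neg at hexi
      set h : Ω → EReal := fun ω => if ω ∈ Dr then (α ω : EReal) else ⊥ with hhdef
      have hlb : ∀ f ∈ {f | ∃ ξ ∈ E, (∀ᵐ ω ∂μ, Y ω ≤ ν ξ ω) ∧ f = ρ ξ},
          ∀ᵐ ω ∂μ, h ω ≤ f ω := by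
        rintro f ⟨ξ, hξE, hξν, rfl⟩
        have h0 : μ (Dr ∩ {ω | ρ ξ ω < (α ω : EReal)}) = 0 :=
          le_antisymm (not_lt.mp (by simpa using hexi ξ ⟨hξE, hξν⟩)) zero_le
        have hae : ∀ᵐ ω ∂μ, ω ∉ Dr ∩ {ω | ρ ξ ω < (α ω : EReal)} :=
          (ae_iff.mpr (by simp only [not_not]; exact h0))
        filter_upwards [hae] with ω hω
        by_cases hωD : ω ∈ Dr
        · rw [hhdef]
          simp only [if_pos hωD]
          exact not_lt.mp fun hc => hω ⟨hωD, hc⟩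
        · rw [hhdef]
          simp [hωD]
      have hhle : ∀ᵐ ω ∂μ, h ω ≤ g ω := hg.2 h hlb
      obtain ⟨ω, hωDr, h1, h2⟩ := hex_pos hDrpos (hlt.and hhle)
      have hωA : ω ∈ A := hωDr.1
      have : (α ω : EReal) ≤ g ω := by
        have := h2
        rw [hhdef] at this
        simpa [if_pos hωDr] using this
      exact absurd (h1 hωA) (not_lt.mpr this)
  -- finish
  have hae : ∀ᵐ ω ∂μ, ω ∉ Dr := ae_iff.mpr (by simpa using hDrnull)
  filter_upwards [hae] with ω hω hωA
  by_contra hc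
  exact hω ⟨hωA, fun hmem => hc hmem.2⟩
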